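/- Let m, n ≥ 1 and let Z = (z_{jk}) be an m×n matrix with z_{jk} > 0 for all j,k. Let M_q be the unique symmetric (m+n)×(m+n) matrix with x^T M_q x = q(x) for all x ∈ ℝ^{m+n}, where q is the quadratic form associated to Z. Let det(q|_H) denote the product of the nonzero eigenvalues of M_q. Then det(q|_H) = (m+n) · 2^{1−m−n} · det Q, where Q is the (m+n−1)×(m+n−1) symmetric matrix associated to Z. -/

import Mathlib

/-- The quadratic form `q` associated to a positive `m × n` matrix `Z`, viewed as a form
on `ℝ^{m+n}`: `q(x) = (1/2) ∑_{j,k} (z_{jk}² + z_{jk})(x_j + x_{m+k})²`. -/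
noncomputable def qformTotal {m n : ℕ} (z : Fin m → Fin n → ℝ)
    (x : Fin (m + n) → ℝ) : ℝ :=
  (1 / 2) * ∑ j : Fin m, ∑ k : Fin n,
    (z j k ^ 2 + z j k) * (x (Fin.castAdd n j) + x (Fin.natAdd m k)) ^ 2

/-- The `(m+n−1) × (m+n−1)` symmetric matrix `Q` associated to `Z`: off-diagonal entries
`Q_{j, m+k} = Q_{m+k, j} = z_{jk}² + z_{jk}` for `j < m`, `k < n−1`; diagonal entries
`Q_{jj} = ∑_k (z_{jk} + z_{jk}²)` for `j < m` and `Q_{m+k, m+k} = ∑_j (z_{jk} + z_{jk}²)`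
for `k < n−1`; all other entries `0`. -/
noncomputable def Qmat {m n : ℕ} (z : Fin m → Fin n → ℝ) :
    Matrix (Fin (m + n - 1)) (Fin (m + n - 1)) ℝ :=
  Matrix.of fun i j =>
    if hi : (i : ℕ) < m then
      if hj : (j : ℕ) < m then
        if i = j then ∑ k : Fin n, (z ⟨i, hi⟩ k + z ⟨i, hi⟩ k ^ 2) else 0
      else
        z ⟨i, hi⟩ ⟨(j : ℕ) - m, by have := j.isLt; omega⟩ ^ 2
          + z ⟨i, hi⟩ ⟨(j : ℕ) - m, by have := j.isLt; omega⟩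
    else
      if hj : (j : ℕ) < m then
        z ⟨j, hj⟩ ⟨(i : ℕ) - m, by have := i.isLt; omega⟩ ^ 2
          + z ⟨j, hj⟩ ⟨(i : ℕ) - m, by have := i.isLt; omega⟩
      else
        if i = j then
          ∑ l : Fin m, (z l ⟨(i : ℕ) - m, by have := i.isLt; omega⟩
            + z l ⟨(i : ℕ) - m, by have := i.isLt; omega⟩ ^ 2)
        else 0

open Matrix Finset

/-- Two symmetric real matrices with the same quadratic form are equal. -/
lemma quad_form_ext' {N : ℕ} {A B : Matrix (Fin N) (Fin N) ℝ}
    (hA : Aᵀ = A) (hB : Bᵀ = B)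
    (h : ∀ x : Fin N → ℝ, x ⬝ᵥ A *ᵥ x = x ⬝ᵥ B *ᵥ x) : A = B := by
  have key : ∀ (M : Matrix (Fin N) (Fin N) ℝ), Mᵀ = M →
      (∀ x : Fin N → ℝ, x ⬝ᵥ M *ᵥ x = 0) → M = 0 := by
    intro M hMs hM0
    ext i j
    have hii := hM0 (Pi.single i 1)
    have hjj := hM0 (Pi.single j 1)
    have hij := hM0 (Pi.single i 1 + Pi.single j 1)
    have hsy : M j i = M i j := by
      have := congrFun (congrFun hMs i) j
      simpa using this
    simp only [mulVec_add, dotProduct_add, add_dotProduct, mulVec_single,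
      dotProduct_single, single_dotProduct, mul_one, one_mul, MulOpposite.op_one, one_smul,
      col_apply] at hii hjj hij
    simp only [Matrix.zero_apply]
    linarith
  have h2 : A - B = 0 := by
    apply key
    · rw [transpose_sub, hA, hB]
    · intro x
      rw [sub_mulVec, dotProduct_sub, h, sub_self]
  exact sub_eq_zero.mp h2

lemma trace_adjugate_eq_prod' {N : ℕ} {A : Matrix (Fin N) (Fin N) ℝ}
    (hA : A.IsHermitian) (i0 : Fin N) (h0 : hA.eigenvalues i0 = 0)
    (huniq : ∀ i, hA.eigenvalues i = 0 → i = i0) :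
    (adjugate A).trace
      = ∏ i ∈ univ.filter (fun i => hA.eigenvalues i ≠ 0), hA.eigenvalues i := by
  set U : Matrix (Fin N) (Fin N) ℝ := (hA.eigenvectorUnitary : Matrix (Fin N) (Fin N) ℝ) with hUdef
  have hU2 : star U * U = 1 := Matrix.mem_unitaryGroup_iff'.mp (hA.eigenvectorUnitary).2
  have hDre : (diagonal (RCLike.ofReal ∘ hA.eigenvalues) : Matrix (Fin N) (Fin N) ℝ)
      = diagonal hA.eigenvalues := by
    congr 1
  have hspec : A = U * diagonal hA.eigenvalues * star U := by
    rw [← hDre]; exact hA.spectral_theorem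
  calc (adjugate A).trace
      = (adjugate (U * diagonal hA.eigenvalues * star U)).trace := by rw [← hspec]
    _ = (adjugate (star U) * (adjugate (diagonal hA.eigenvalues) * adjugate U)).trace := by
        rw [adjugate_mul_distrib, adjugate_mul_distrib]
    _ = (adjugate (star U) * adjugate (diagonal hA.eigenvalues) * adjugate U).trace := by
        rw [mul_assoc]
    _ = (adjugate U * adjugate (star U) * adjugate (diagonal hA.eigenvalues)).trace := by
        rw [trace_mul_cycle]
    _ = ((adjugate (star U * U)) * adjugate (diagonal hA.eigenvalues)).trace := by
        rw [adjugate_mul_distrib]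
    _ = (adjugate (diagonal hA.eigenvalues)).trace := by
        rw [hU2, adjugate_one, one_mul]
    _ = ∑ i, ∏ j ∈ univ.erase i, hA.eigenvalues j := by
        rw [adjugate_diagonal, trace_diagonal]
    _ = ∏ j ∈ univ.erase i0, hA.eigenvalues j := by
        apply Finset.sum_eq_single i0
        · intro i _ hne
          exact Finset.prod_eq_zero (Finset.mem_erase.mpr ⟨Ne.symm hne, mem_univ _⟩) h0
        · intro h; exact absurd (mem_univ i0) h
    _ = ∏ i ∈ univ.filter (fun i => hA.eigenvalues i ≠ 0), hA.eigenvalues i := by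
        apply Finset.prod_congr _ (fun _ _ => rfl)
        ext j
        simp only [mem_erase, mem_univ, and_true, mem_filter, true_and]
        constructor
        · intro hj hev
          exact hj (huniq j hev)
        · intro hev hj
          exact hev (hj ▸ h0)

noncomputable def M0aux {m n : ℕ} (z : Fin m → Fin n → ℝ) :
    Matrix (Fin (m + n)) (Fin (m + n)) ℝ :=
  Matrix.of fun i j =>
    if hi : (i : ℕ) < m then
      if hj : (j : ℕ) < m then
        if i = j then 2⁻¹ * ∑ k : Fin n, (z ⟨i, hi⟩ k ^ 2 + z ⟨i, hi⟩ k) else 0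
      else
        2⁻¹ * (z ⟨i, hi⟩ ⟨(j : ℕ) - m, by have := j.isLt; omega⟩ ^ 2
          + z ⟨i, hi⟩ ⟨(j : ℕ) - m, by have := j.isLt; omega⟩)
    else
      if hj : (j : ℕ) < m then
        2⁻¹ * (z ⟨j, hj⟩ ⟨(i : ℕ) - m, by have := i.isLt; omega⟩ ^ 2
          + z ⟨j, hj⟩ ⟨(i : ℕ) - m, by have := i.isLt; omega⟩)
      else
        if i = j then
          2⁻¹ * ∑ l : Fin m, (z l ⟨(i : ℕ) - m, by have := i.isLt; omega⟩ ^ 2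
            + z l ⟨(i : ℕ) - m, by have := i.isLt; omega⟩)
        else 0

lemma M0aux_cc {m n : ℕ} (z : Fin m → Fin n → ℝ) (j j' : Fin m) :
    M0aux z (Fin.castAdd n j) (Fin.castAdd n j')
      = if j = j' then 2⁻¹ * ∑ k : Fin n, (z j k ^ 2 + z j k) else 0 := by
  simp only [M0aux, Matrix.of_apply, Fin.coe_castAdd]
  rw [dif_pos j.isLt, dif_pos j'.isLt]
  have h1 : (Fin.castAdd n j = Fin.castAdd n j') ↔ j = j' := by
    simp [Fin.ext_iff]
  have h2 : (⟨(j : ℕ), j.isLt⟩ : Fin m) = j := rfl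
  simp [h1, h2]

lemma M0aux_cn {m n : ℕ} (z : Fin m → Fin n → ℝ) (j : Fin m) (k : Fin n) :
    M0aux z (Fin.castAdd n j) (Fin.natAdd m k)
      = 2⁻¹ * (z j k ^ 2 + z j k) := by
  simp only [M0aux, Matrix.of_apply, Fin.coe_castAdd, Fin.coe_natAdd]
  rw [dif_pos j.isLt, dif_neg (by omega)]
  have h2 : (⟨(j : ℕ), j.isLt⟩ : Fin m) = j := rfl
  have h3 : (⟨m + (k : ℕ) - m, by have := k.isLt; omega⟩ : Fin n) = k := by
    apply Fin.ext; simp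
  simp [h2, h3]

lemma M0aux_nc {m n : ℕ} (z : Fin m → Fin n → ℝ) (k : Fin n) (j : Fin m) :
    M0aux z (Fin.natAdd m k) (Fin.castAdd n j)
      = 2⁻¹ * (z j k ^ 2 + z j k) := by
  simp only [M0aux, Matrix.of_apply, Fin.coe_castAdd, Fin.coe_natAdd]
  rw [dif_neg (by omega), dif_pos j.isLt]
  have h2 : (⟨(j : ℕ), j.isLt⟩ : Fin m) = j := rfl
  have h3 : (⟨m + (k : ℕ) - m, by have := k.isLt; omega⟩ : Fin n) = k := by
    apply Fin.ext; simp
  simp [h2, h3]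

lemma M0aux_nn {m n : ℕ} (z : Fin m → Fin n → ℝ) (k k' : Fin n) :
    M0aux z (Fin.natAdd m k) (Fin.natAdd m k')
      = if k = k' then 2⁻¹ * ∑ l : Fin m, (z l k ^ 2 + z l k) else 0 := by
  simp only [M0aux, Matrix.of_apply, Fin.coe_natAdd]
  rw [dif_neg (by omega), dif_neg (by omega)]
  have h1 : (Fin.natAdd m k = Fin.natAdd m k') ↔ k = k' := by
    simp [Fin.ext_iff]
  have h3 : (⟨m + (k : ℕ) - m, by have := k.isLt; omega⟩ : Fin n) = k := by
    apply Fin.ext; simp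
  simp [h1, h3]

lemma M0aux_symm {m n : ℕ} (z : Fin m → Fin n → ℝ) : (M0aux z)ᵀ = M0aux z := by
  ext i j
  rw [transpose_apply]
  simp only [M0aux, Matrix.of_apply]
  split_ifs with h1 h2 h3 h4 h5 h6 h7 h8 <;> first
    | rfl
    | simp_all [eq_comm]

lemma M0aux_quad {m n : ℕ} (z : Fin m → Fin n → ℝ) (x : Fin (m + n) → ℝ) :
    x ⬝ᵥ (M0aux z *ᵥ x) = qformTotal z x := by
  have hMc : ∀ j : Fin m, (M0aux z *ᵥ x) (Fin.castAdd n j)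
      = ∑ k : Fin n, (z j k ^ 2 + z j k)
          * (2⁻¹ * (x (Fin.castAdd n j) + x (Fin.natAdd m k))) := by
    intro j
    show ∑ p, M0aux z (Fin.castAdd n j) p * x p = _
    rw [Fin.sum_univ_add (f := fun p => M0aux z (Fin.castAdd n j) p * x p)]
    simp only [M0aux_cc, M0aux_cn, ite_mul, zero_mul]
    rw [Finset.sum_ite_eq]
    simp only [mem_univ, if_pos]
    rw [eq_comm]
    calc ∑ k : Fin n, (z j k ^ 2 + z j k)
          * (2⁻¹ * (x (Fin.castAdd n j) + x (Fin.natAdd m k)))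
        = ∑ k : Fin n, ((2⁻¹ * (z j k ^ 2 + z j k)) * x (Fin.castAdd n j)
            + 2⁻¹ * (z j k ^ 2 + z j k) * x (Fin.natAdd m k)) :=
          Finset.sum_congr rfl (fun k _ => by ring)
      _ = (∑ k : Fin n, (2⁻¹ * (z j k ^ 2 + z j k)) * x (Fin.castAdd n j))
            + ∑ k : Fin n, 2⁻¹ * (z j k ^ 2 + z j k) * x (Fin.natAdd m k) :=
          Finset.sum_add_distrib
      _ = (2⁻¹ * ∑ k : Fin n, (z j k ^ 2 + z j k)) * x (Fin.castAdd n j)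
            + ∑ k : Fin n, 2⁻¹ * (z j k ^ 2 + z j k) * x (Fin.natAdd m k) := by
          rw [← Finset.sum_mul, ← Finset.mul_sum]
  have hMn : ∀ k : Fin n, (M0aux z *ᵥ x) (Fin.natAdd m k)
      = ∑ j : Fin m, (z j k ^ 2 + z j k)
          * (2⁻¹ * (x (Fin.natAdd m k) + x (Fin.castAdd n j))) := by
    intro k
    show ∑ p, M0aux z (Fin.natAdd m k) p * x p = _
    rw [Fin.sum_univ_add (f := fun p => M0aux z (Fin.natAdd m k) p * x p)]
    simp only [M0aux_nc, M0aux_nn, ite_mul, zero_mul]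
    rw [Finset.sum_ite_eq]
    simp only [mem_univ, if_pos]
    rw [eq_comm]
    calc ∑ j : Fin m, (z j k ^ 2 + z j k)
          * (2⁻¹ * (x (Fin.natAdd m k) + x (Fin.castAdd n j)))
        = ∑ j : Fin m, (2⁻¹ * (z j k ^ 2 + z j k) * x (Fin.castAdd n j)
            + (2⁻¹ * (z j k ^ 2 + z j k)) * x (Fin.natAdd m k)) :=
          Finset.sum_congr rfl (fun j _ => by ring)
      _ = (∑ j : Fin m, 2⁻¹ * (z j k ^ 2 + z j k) * x (Fin.castAdd n j))
            + ∑ j : Fin m, (2⁻¹ * (z j k ^ 2 + z j k)) * x (Fin.natAdd m k) :=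
          Finset.sum_add_distrib
      _ = (∑ j : Fin m, 2⁻¹ * (z j k ^ 2 + z j k) * x (Fin.castAdd n j))
            + (2⁻¹ * ∑ j : Fin m, (z j k ^ 2 + z j k)) * x (Fin.natAdd m k) := by
          rw [← Finset.sum_mul, ← Finset.mul_sum]
  have hsplit : x ⬝ᵥ (M0aux z *ᵥ x)
      = (∑ j : Fin m, x (Fin.castAdd n j) * (M0aux z *ᵥ x) (Fin.castAdd n j))
        + ∑ k : Fin n, x (Fin.natAdd m k) * (M0aux z *ᵥ x) (Fin.natAdd m k) := by
    show (∑ i, x i * (M0aux z *ᵥ x) i) = _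
    exact Fin.sum_univ_add _
  rw [hsplit]
  simp only [hMc, hMn, Finset.mul_sum]
  rw [Finset.sum_comm (s := (univ : Finset (Fin n))) (t := (univ : Finset (Fin m)))]
  rw [← Finset.sum_add_distrib]
  unfold qformTotal
  rw [Finset.mul_sum]
  apply Finset.sum_congr rfl
  intro j _
  rw [← Finset.sum_add_distrib, Finset.mul_sum]
  apply Finset.sum_congr rfl
  intro k _
  ring

/-- Change of coordinate basis: the product of the nonzero eigenvalues of the symmetric
matrix `M_q` representing `q` (i.e. `det(q|_H)`) equals `(m+n) · 2^{1−m−n} · det Q`. -/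
theorem det_q_restricted_eq (m n : ℕ) (hm : 1 ≤ m) (hn : 1 ≤ n)
    (z : Fin m → Fin n → ℝ) (hz : ∀ j k, 0 < z j k)
    (Mq : Matrix (Fin (m + n)) (Fin (m + n)) ℝ)
    (hMq : Mq.IsHermitian)
    (hrep : ∀ x : Fin (m + n) → ℝ, dotProduct x (Mq.mulVec x) = qformTotal z x) :
    (∏ i ∈ Finset.univ.filter (fun i => hMq.eigenvalues i ≠ 0), hMq.eigenvalues i)
      = ((m : ℝ) + n) * (2 : ℝ) ^ ((1 : ℤ) - m - n) * (Qmat z).det := by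
  obtain ⟨a, rfl⟩ : ∃ a, m = a + 1 := ⟨m - 1, by omega⟩
  obtain ⟨b, rfl⟩ : ∃ b, n = b + 1 := ⟨n - 1, by omega⟩
  clear hm hn
  set v : Fin (a + 1 + (b + 1)) → ℝ := fun i => if (i : ℕ) < a + 1 then 1 else -1 with hvdef
  have hstar : ∀ x : Fin (a + 1 + (b + 1)) → ℝ, star x = x := fun x => by
    ext i; simp
  -- nonnegativity of q
  have hqnonneg : ∀ x, 0 ≤ qformTotal z x := by
    intro x
    unfold qformTotal
    apply mul_nonneg (by norm_num)
    refine Finset.sum_nonneg fun j _ => Finset.sum_nonneg fun k _ => ?_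
    exact mul_nonneg (add_nonneg (sq_nonneg _) (hz j k).le) (sq_nonneg _)
  have hPSD : Mq.PosSemidef := by
    refine Matrix.posSemidef_iff_dotProduct_mulVec.mpr ⟨hMq, fun x => ?_⟩
    rw [hstar x, hrep x]
    exact hqnonneg x
  -- v values
  have hvc : ∀ j : Fin (a + 1), v (Fin.castAdd (b + 1) j) = 1 := by
    intro j
    simp only [hvdef]
    rw [if_pos]
    simpa using j.isLt
  have hvn : ∀ k : Fin (b + 1), v (Fin.natAdd (a + 1) k) = -1 := by
    intro k
    simp only [hvdef]
    rw [if_neg]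
    simp
    omega
  have hvq : qformTotal z v = 0 := by
    unfold qformTotal
    have h : ∀ (j : Fin (a + 1)) (k : Fin (b + 1)),
        (z j k ^ 2 + z j k) * (v (Fin.castAdd (b + 1) j) + v (Fin.natAdd (a + 1) k)) ^ 2 = 0 := by
      intro j k
      rw [hvc j, hvn k]
      ring
    rw [Finset.sum_congr rfl fun j _ => Finset.sum_congr rfl fun k _ => h j k]
    simp
  have hMv : Mq *ᵥ v = 0 := by
    apply (hPSD.dotProduct_mulVec_zero_iff v).mp
    rw [hstar v, hrep v, hvq]
  -- kernel of Mq is spanned by v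
  have hker : ∀ x : Fin (a + 1 + (b + 1)) → ℝ, Mq *ᵥ x = 0 → ∃ c : ℝ, x = c • v := by
    intro x hx
    have hq0 : qformTotal z x = 0 := by rw [← hrep, hx, dotProduct_zero]
    unfold qformTotal at hq0
    have hnn : ∀ (j : Fin (a + 1)) (k : Fin (b + 1)), 0 ≤ (z j k ^ 2 + z j k)
        * (x (Fin.castAdd (b + 1) j) + x (Fin.natAdd (a + 1) k)) ^ 2 :=
      fun j k => mul_nonneg (add_nonneg (sq_nonneg _) (hz j k).le) (sq_nonneg _)
    have hsum : ∑ j : Fin (a + 1), ∑ k : Fin (b + 1),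
        (z j k ^ 2 + z j k) * (x (Fin.castAdd (b + 1) j) + x (Fin.natAdd (a + 1) k)) ^ 2 = 0 := by
      linarith
    have h1 := (Finset.sum_eq_zero_iff_of_nonneg
      (fun j _ => Finset.sum_nonneg fun k _ => hnn j k)).mp hsum
    have h2 : ∀ (j : Fin (a + 1)) (k : Fin (b + 1)),
        (z j k ^ 2 + z j k) * (x (Fin.castAdd (b + 1) j) + x (Fin.natAdd (a + 1) k)) ^ 2 = 0 :=
      fun j k => (Finset.sum_eq_zero_iff_of_nonneg (fun k _ => hnn j k)).mp
        (h1 j (mem_univ j)) k (mem_univ k)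
    have key : ∀ (j : Fin (a + 1)) (k : Fin (b + 1)),
        x (Fin.castAdd (b + 1) j) + x (Fin.natAdd (a + 1) k) = 0 := by
      intro j k
      have hzne : z j k ^ 2 + z j k ≠ 0 := by nlinarith [hz j k, sq_nonneg (z j k)]
      have hsq : (x (Fin.castAdd (b + 1) j) + x (Fin.natAdd (a + 1) k)) ^ 2 = 0 := by
        rcases mul_eq_zero.mp (h2 j k) with h | h
        · exact absurd h hzne
        · exact h
      exact pow_eq_zero_iff (two_ne_zero) |>.mp hsq
    refine ⟨x (Fin.castAdd (b + 1) ⟨0, Nat.succ_pos a⟩), ?_⟩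
    funext i
    simp only [Pi.smul_apply, smul_eq_mul, hvdef]
    by_cases hi : (i : ℕ) < a + 1
    · have e1 := key ⟨(i : ℕ), hi⟩ ⟨0, Nat.succ_pos b⟩
      have e2 := key ⟨0, Nat.succ_pos a⟩ ⟨0, Nat.succ_pos b⟩
      have hi' : Fin.castAdd (b + 1) ⟨(i : ℕ), hi⟩ = i := by
        apply Fin.ext; simp
      rw [hi'] at e1
      rw [if_pos hi, mul_one]
      linarith
    · have e1 := key ⟨0, Nat.succ_pos a⟩ ⟨(i : ℕ) - (a + 1), by have := i.isLt; omega⟩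
      have hi' : Fin.natAdd (a + 1) ⟨(i : ℕ) - (a + 1), by have := i.isLt; omega⟩ = i := by
        apply Fin.ext; simp; omega
      rw [hi'] at e1
      rw [if_neg hi]
      linarith
  -- determinant of Mq vanishes
  have hdet0 : Mq.det = 0 := by
    by_contra hne
    have h1 : (Mq⁻¹ * Mq) *ᵥ v = v := by
      rw [Matrix.nonsing_inv_mul _ (isUnit_iff_ne_zero.mpr hne), one_mulVec]
    rw [← Matrix.mulVec_mulVec, hMv, mulVec_zero] at h1
    have h2 : v (Fin.castAdd (b + 1) ⟨0, Nat.succ_pos a⟩) = 0 := by rw [← h1]; rfl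
    rw [hvc] at h2
    norm_num at h2
  -- there is a zero eigenvalue
  have hex : ∃ i0, hMq.eigenvalues i0 = 0 := by
    have hdp := hMq.det_eq_prod_eigenvalues
    rw [hdet0] at hdp
    obtain ⟨i0, _, h⟩ := Finset.prod_eq_zero_iff.mp hdp.symm
    refine ⟨i0, ?_⟩
    exact_mod_cast h
  obtain ⟨i0, h0⟩ := hex
  have hvsq : (∑ i, v i ^ 2) = ((a : ℝ) + 1 + ((b : ℝ) + 1)) := by
    have h : ∀ i, v i ^ 2 = 1 := by
      intro i; simp only [hvdef]; split_ifs <;> norm_num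
    rw [Finset.sum_congr rfl fun i _ => h i, Finset.sum_const, Finset.card_univ]
    simp only [Fintype.card_fin, nsmul_eq_mul, mul_one]
    push_cast; ring
  -- zero eigenvalue is unique
  have huniq : ∀ i, hMq.eigenvalues i = 0 → i = i0 := by
    intro i hi
    by_contra hne
    have hb_i := hMq.mulVec_eigenvectorBasis i
    have hb_i0 := hMq.mulVec_eigenvectorBasis i0
    rw [hi, zero_smul] at hb_i
    rw [h0, zero_smul] at hb_i0
    obtain ⟨c, hc⟩ := hker _ hb_i
    obtain ⟨d, hd⟩ := hker _ hb_i0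
    have hbne_i := hMq.eigenvectorBasis.orthonormal.ne_zero i
    have hbne_i0 := hMq.eigenvectorBasis.orthonormal.ne_zero i0
    have hcne : c ≠ 0 := by
      intro h
      apply hbne_i
      apply PiLp.ext
      intro k
      have := congrFun hc k
      simp only [h, zero_smul, Pi.zero_apply] at this
      simpa using this
    have hdne : d ≠ 0 := by
      intro h
      apply hbne_i0
      apply PiLp.ext
      intro k
      have := congrFun hd k
      simp only [h, zero_smul, Pi.zero_apply] at this
      simpa using this
    have horth : (inner ℝ (hMq.eigenvectorBasis i) (hMq.eigenvectorBasis i0) : ℝ) = 0 :=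
      hMq.eigenvectorBasis.orthonormal.2 hne
    rw [PiLp.inner_apply] at horth
    simp only [RCLike.inner_apply, starRingEnd_apply, star_trivial] at horth
    have hc' : ∀ k, hMq.eigenvectorBasis i k = c * v k := by
      intro k
      have := congrFun hc k
      simpa using this
    have hd' : ∀ k, hMq.eigenvectorBasis i0 k = d * v k := by
      intro k
      have := congrFun hd k
      simpa using this
    have horth' : ∑ k, (c * v k) * (d * v k) = 0 := by
      rw [← horth]
      exact Finset.sum_congr rfl fun k _ => by rw [hc' k, hd' k]; ring
    have hcd : c * d * (∑ k, v k ^ 2) = 0 := by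
      rw [Finset.mul_sum, ← horth']
      apply Finset.sum_congr rfl
      intro k _
      ring
    rw [hvsq] at hcd
    have : c * d * ((a : ℝ) + 1 + ((b : ℝ) + 1)) ≠ 0 := by
      apply mul_ne_zero (mul_ne_zero hcne hdne)
      positivity
    exact this hcd
  -- product of nonzero eigenvalues = trace of adjugate
  have htr := trace_adjugate_eq_prod' hMq i0 h0 huniq
  -- structure of the adjugate
  have hsym : Mqᵀ = Mq := by
    ext i j
    have h := congrFun (congrFun hMq i) j
    simpa using h
  have hadj0 : Mq * adjugate Mq = 0 := by rw [mul_adjugate, hdet0, zero_smul]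
  have hcols : ∀ jj, ∃ c : ℝ, (fun i => adjugate Mq i jj) = c • v := by
    intro jj
    apply hker
    funext i
    have h : (Mq *ᵥ fun p => adjugate Mq p jj) i = (Mq * adjugate Mq) i jj := by
      simp [mulVec, dotProduct, Matrix.mul_apply]
    rw [h, hadj0]
    simp
  choose cfun hcfun using hcols
  have hent : ∀ i jj, adjugate Mq i jj = cfun jj * v i := by
    intro i jj
    have := congrFun (hcfun jj) i
    simpa using this
  have hadjsymM : (adjugate Mq)ᵀ = adjugate Mq := by rw [adjugate_transpose, hsym]
  have hadjsym : ∀ i j, adjugate Mq i j = adjugate Mq j i := by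
    intro i j
    have := congrFun (congrFun hadjsymM j) i
    simpa using this
  set e : Fin (a + 1 + (b + 1)) := Fin.last (a + 1 + b) with hedef
  have hve : v e = -1 := by
    simp only [hvdef, hedef]
    rw [if_neg]
    simp only [Fin.val_last]
    omega
  -- relation Mq = M0aux
  have hMqM0 : Mq = M0aux z :=
    quad_form_ext' hsym (M0aux_symm z) fun x => (hrep x).trans (M0aux_quad z x).symm
  -- adjugate diagonal entry = det of last principal minor
  have hgamma : adjugate Mq e e = (Mq.submatrix Fin.castSucc Fin.castSucc).det := by
    rw [hedef, adjugate_fin_succ_eq_det_submatrix]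
    have hsa : (Fin.last (a + 1 + b)).succAbove = (Fin.castSucc : Fin (a + 1 + b) → Fin (a + 1 + b + 1)) :=
      Fin.succAbove_last
    rw [hsa, Fin.val_last]
    rw [show (-1 : ℝ) ^ (a + 1 + b + (a + 1 + b)) = 1 from Even.neg_one_pow ⟨a + 1 + b, rfl⟩]
    rw [one_mul]
  have htrace : (adjugate Mq).trace = adjugate Mq e e * ((a : ℝ) + 1 + ((b : ℝ) + 1)) := by
    have hterm : ∀ i, adjugate Mq i i = adjugate Mq e e * v i ^ 2 := by
      intro i
      have hkey : cfun i * v e = cfun e * v i :=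
        (hent e i).symm.trans ((hadjsym e i).trans (hent i e))
      rw [hve] at hkey
      rw [hent i i, hent e e, hve]
      linear_combination (-(v i)) * hkey
    calc (adjugate Mq).trace = ∑ i, adjugate Mq i i := by
          simp [Matrix.trace, Matrix.diag]
      _ = ∑ i, adjugate Mq e e * v i ^ 2 := Finset.sum_congr rfl fun i _ => hterm i
      _ = adjugate Mq e e * ∑ i, v i ^ 2 := by rw [← Finset.mul_sum]
      _ = adjugate Mq e e * ((a : ℝ) + 1 + ((b : ℝ) + 1)) := by rw [hvsq]
  -- Q = 2 * minor
  have hQ2 : Qmat z = (2 : ℝ) • ((M0aux z).submatrix Fin.castSucc Fin.castSucc) := by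
    ext i j
    simp only [Matrix.smul_apply, submatrix_apply, smul_eq_mul, Qmat, M0aux,
      Matrix.of_apply, Fin.coe_castSucc]
    by_cases hi : (i : ℕ) < a + 1 <;> by_cases hj : (j : ℕ) < a + 1
    · rw [dif_pos hi, dif_pos hi, dif_pos hj, dif_pos hj]
      have hcs : (Fin.castSucc i = Fin.castSucc j) ↔ i = j := by
        simp [Fin.ext_iff]
      by_cases hij : i = j
      · rw [if_pos hij, if_pos (hcs.mpr hij)]
        rw [show (∑ k, (z ⟨(i : ℕ), hi⟩ k + z ⟨(i : ℕ), hi⟩ k ^ 2))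
            = ∑ k, (z ⟨(i : ℕ), hi⟩ k ^ 2 + z ⟨(i : ℕ), hi⟩ k) from
          Finset.sum_congr rfl fun k _ => add_comm _ _]
        ring
      · rw [if_neg hij, if_neg (fun h => hij (hcs.mp h))]
        ring
    · rw [dif_pos hi, dif_pos hi, dif_neg hj, dif_neg hj]
      ring
    · rw [dif_neg hi, dif_neg hi, dif_pos hj, dif_pos hj]
      ring
    · rw [dif_neg hi, dif_neg hi, dif_neg hj, dif_neg hj]
      have hcs : (Fin.castSucc i = Fin.castSucc j) ↔ i = j := by
        simp [Fin.ext_iff]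
      by_cases hij : i = j
      · rw [if_pos hij, if_pos (hcs.mpr hij)]
        rw [show (∑ l, (z l ⟨(i : ℕ) - (a + 1), by have := i.isLt; omega⟩
              + z l ⟨(i : ℕ) - (a + 1), by have := i.isLt; omega⟩ ^ 2))
            = ∑ l, (z l ⟨(i : ℕ) - (a + 1), by have := i.isLt; omega⟩ ^ 2
              + z l ⟨(i : ℕ) - (a + 1), by have := i.isLt; omega⟩) from
          Finset.sum_congr rfl fun l _ => add_comm _ _]
        ring
      · rw [if_neg hij, if_neg (fun h => hij (hcs.mp h))]
        ring
  -- determinant bookkeeping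
  have hdetQ : (Qmat z).det
      = 2 ^ (a + 1 + b) * ((M0aux z).submatrix Fin.castSucc Fin.castSucc).det := by
    rw [hQ2, det_smul]
    congr 2
    simp
  have hexp : (2 : ℝ) ^ ((1 : ℤ) - ((a : ℕ) + 1 : ℕ) - ((b : ℕ) + 1 : ℕ))
      = ((2 : ℝ) ^ (a + 1 + b : ℕ))⁻¹ := by
    rw [show (1 : ℤ) - ((a : ℕ) + 1 : ℕ) - ((b : ℕ) + 1 : ℕ) = -((a + 1 + b : ℕ) : ℤ) by
      push_cast; ring]
    rw [_root_.zpow_neg, zpow_natCast]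
  rw [← htr, htrace, hgamma, hMqM0, hdetQ, hexp]
  have h2k : (2 : ℝ) ^ (a + 1 + b : ℕ) ≠ 0 := by positivity
  push_cast
  field_simp
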